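/- arXiv:1809.07870 — 7 statements merged into one kernel-verified Lean document; each statement's English description precedes it below -/
import Mathlib

section
/- Let Z = c ⊕ G B^r ⊂ ℝ^n be a zonotope, let S = {x ∈ ℝ^n : |ρᵀx − γ| ≤ σ} be a strip with ρ ∈ ℝ^n, γ ∈ ℝ, σ ≥ 0, and let λ ∈ ℝ^n be arbitrary. Define c_I(λ) := c + λ(γ − ρᵀc) and G_I(λ) := [(I_n − λρᵀ)G σλ] ∈ ℝ^{n×(r+1)} (horizontal concatenation). Then Z ∩ S ⊆ c_I(λ) ⊕ G_I(λ) B^{r+1}. -/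
open Matrix

/-- The zonotope with center `c` and generator matrix `G`:
`c ⊕ G B^r = {c + G b : b ∈ [-1,1]^r}`. -/
def zonotope {n : ℕ} {ι : Type*} [Fintype ι] (c : Fin n → ℝ)
    (G : Matrix (Fin n) ι ℝ) : Set (Fin n → ℝ) :=
  {x | ∃ b : ι → ℝ, (∀ j, |b j| ≤ 1) ∧ x = c + G.mulVec b}

/-- Intersection of a zonotope with a strip is contained in the
parametrized zonotope `c_I(λ) ⊕ G_I(λ) B^{r+1}` with
`c_I(λ) = c + λ(γ − ρᵀc)` and `G_I(λ) = [(I − λρᵀ)G  σλ]`. -/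
theorem zonotope_inter_strip_subset (n r : ℕ) (c : Fin n → ℝ)
    (G : Matrix (Fin n) (Fin r) ℝ) (ρ : Fin n → ℝ) (γ σ : ℝ) (hσ : 0 ≤ σ)
    (lam : Fin n → ℝ) :
    zonotope c G ∩ {x | |ρ ⬝ᵥ x - γ| ≤ σ} ⊆
      zonotope (c + (γ - ρ ⬝ᵥ c) • lam)
        (Matrix.fromCols ((1 - Matrix.vecMulVec lam ρ) * G)
          (Matrix.of fun i (_ : Fin 1) => σ * lam i)) := by
  rintro x ⟨⟨b, hb, rfl⟩, hx⟩
  simp only [Set.mem_setOf_eq] at hx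
  set t := ρ ⬝ᵥ (c + G.mulVec b) - γ with ht
  set w : ℝ := if σ = 0 then 0 else t / σ with hw
  have hσw : σ * w = t := by
    rw [hw]
    split_ifs with h
    · have h0 : t = 0 := by
        rw [h] at hx; simpa [abs_nonpos_iff] using hx
      simp [h, h0]
    · field_simp
  refine ⟨Sum.elim b (fun _ => w), ?_, ?_⟩
  · rintro (j | j)
    · exact hb j
    · simp only [Sum.elim_inr, hw]
      split_ifs with h
      · norm_num
      · rw [abs_div, abs_of_nonneg hσ, div_le_one (lt_of_le_of_ne hσ (Ne.symm h))]
        exact hx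
  · rw [Matrix.fromCols_mulVec_sumElim]
    have h1 : ((1 - Matrix.vecMulVec lam ρ) * G).mulVec b
        = G.mulVec b - (ρ ⬝ᵥ G.mulVec b) • lam := by
      rw [Matrix.sub_mul, Matrix.one_mul, Matrix.sub_mulVec, ← Matrix.mulVec_mulVec]
      congr 1
      funext i
      simp [Matrix.mulVec, dotProduct, Matrix.vecMulVec, Finset.mul_sum,
        mul_comm, mul_left_comm]
    have h2 : (Matrix.of fun i (_ : Fin 1) => σ * lam i).mulVec (fun _ => w)
        = (σ * w) • lam := by
      funext i
      simp only [Matrix.mulVec, dotProduct, Matrix.of_apply, Fin.sum_univ_one, Pi.smul_apply, smul_eq_mul]; ring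
    rw [h1, h2, hσw]
    have hρ : ρ ⬝ᵥ (c + G.mulVec b) = ρ ⬝ᵥ c + ρ ⬝ᵥ G.mulVec b :=
      dotProduct_add ρ _ _
    funext i
    simp only [Pi.add_apply, Pi.sub_apply, Pi.smul_apply, smul_eq_mul, ht, hρ]
    ring
end

section
/- Let G ∈ ℝ^{n×r}, ρ ∈ ℝ^n and σ ∈ ℝ with ρᵀG Gᵀρ + σ² > 0. For λ ∈ ℝ^n define G_I(λ) := [(I_n − λρᵀ)G σλ] ∈ ℝ^{n×(r+1)}. Then the choice λ* = (G Gᵀ ρ)/(ρᵀ G Gᵀ ρ + σ²) minimizes the Frobenius norm of G_I(λ): for every λ ∈ ℝ^n, ‖G_I(λ*)‖_F ≤ ‖G_I(λ)‖_F. -/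
open Matrix

/-- The Frobenius norm of a real matrix. -/
noncomputable def frobNorm {ι κ : Type*} [Fintype ι] [Fintype κ]
    (M : Matrix ι κ ℝ) : ℝ :=
  Real.sqrt (∑ i, ∑ j, (M i j) ^ 2)

/-- The generator matrix `G_I(λ) = [(I − λρᵀ)G  σλ]` of the intersection zonotope. -/
def GI {n r : ℕ} (G : Matrix (Fin n) (Fin r) ℝ) (ρ : Fin n → ℝ) (σ : ℝ)
    (lam : Fin n → ℝ) : Matrix (Fin n) (Fin r ⊕ Fin 1) ℝ :=
  Matrix.fromCols ((1 - Matrix.vecMulVec lam ρ) * G)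
    (Matrix.of fun i (_ : Fin 1) => σ * lam i)

lemma GI_entry_key {n r : ℕ} (G : Matrix (Fin n) (Fin r) ℝ) (ρ : Fin n → ℝ)
    (lam : Fin n → ℝ) (i : Fin n) (j : Fin r) :
    (((1 : Matrix (Fin n) (Fin n) ℝ) - Matrix.vecMulVec lam ρ) * G) i j
      = G i j - lam i * ∑ k, ρ k * G k j := by
  rw [Matrix.sub_mul, Matrix.one_mul, Matrix.sub_apply, Matrix.mul_apply]
  simp only [Matrix.vecMulVec_apply]
  rw [Finset.mul_sum]
  congr 1
  exact Finset.sum_congr rfl fun k _ => by ring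

lemma quad_key (a b c x : ℝ) (ha : 0 < a) :
    c - 2 * (a⁻¹ * b) * b + (a⁻¹ * b) ^ 2 * a ≤ c - 2 * x * b + x ^ 2 * a := by
  have ha' : a ≠ 0 := ne_of_gt ha
  have key : c - 2 * (a⁻¹ * b) * b + (a⁻¹ * b) ^ 2 * a = c - b ^ 2 / a := by
    field_simp; ring
  rw [key]
  have h : (c - 2 * x * b + x ^ 2 * a) - (c - b ^ 2 / a) = (a * x - b) ^ 2 / a := by
    field_simp; ring
  have h2 := div_nonneg (sq_nonneg (a * x - b)) ha.le
  linarith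

/-- The choice `λ* = (G Gᵀ ρ)/(ρᵀ G Gᵀ ρ + σ²)` minimizes the Frobenius norm of
`G_I(λ)`. -/
theorem GI_frobNorm_min (n r : ℕ) (G : Matrix (Fin n) (Fin r) ℝ)
    (ρ : Fin n → ℝ) (σ : ℝ)
    (hpos : ρ ⬝ᵥ (G * Gᵀ).mulVec ρ + σ ^ 2 > 0) :
    ∀ lam : Fin n → ℝ,
      frobNorm (GI G ρ σ ((ρ ⬝ᵥ (G * Gᵀ).mulVec ρ + σ ^ 2)⁻¹ • (G * Gᵀ).mulVec ρ)) ≤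
        frobNorm (GI G ρ σ lam) := by
  intro lam
  set a : ℝ := ρ ⬝ᵥ (G * Gᵀ).mulVec ρ + σ ^ 2 with ha_def
  set t : Fin r → ℝ := fun j => ∑ k, ρ k * G k j with ht_def
  set b : Fin n → ℝ := (G * Gᵀ).mulVec ρ with hb_def
  have hb : ∀ i, b i = ∑ j, G i j * t j := by
    intro i
    simp only [hb_def, Matrix.mulVec, Matrix.mul_apply, dotProduct,
      Matrix.transpose_apply, Finset.sum_mul, ht_def, Finset.mul_sum]
    rw [Finset.sum_comm]
    exact Finset.sum_congr rfl fun j _ => Finset.sum_congr rfl fun k _ => by ring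
  have ha : a = (∑ j, (t j) ^ 2) + σ ^ 2 := by
    have : ρ ⬝ᵥ (G * Gᵀ).mulVec ρ = ∑ j, (t j) ^ 2 := by
      simp only [dotProduct, ← hb_def]
      calc ∑ i, ρ i * b i = ∑ i, ∑ j, ρ i * (G i j * t j) := by
            refine Finset.sum_congr rfl fun i _ => ?_
            rw [hb i, Finset.mul_sum]
        _ = ∑ j, ∑ i, ρ i * (G i j * t j) := Finset.sum_comm
        _ = ∑ j, (t j) ^ 2 := by
            refine Finset.sum_congr rfl fun j _ => ?_
            rw [show (t j) ^ 2 = (∑ k, ρ k * G k j) * t j from by rw [ht_def]; ring]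
            rw [Finset.sum_mul]
            exact Finset.sum_congr rfl fun i _ => by ring
    rw [ha_def, this]
  -- rowwise value of the squared norm
  have hrow : ∀ (μ : Fin n → ℝ) (i : Fin n),
      (∑ j, (GI G ρ σ μ i j) ^ 2)
        = (∑ j, (G i j) ^ 2) - 2 * μ i * b i + (μ i) ^ 2 * a := by
    intro μ i
    rw [Fintype.sum_sum_type]
    have h1 : ∀ j : Fin r, GI G ρ σ μ i (Sum.inl j) = G i j - μ i * t j := by
      intro j
      simp only [GI, Matrix.fromCols, Matrix.of_apply, Sum.elim_inl]
      exact GI_entry_key G ρ μ i j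
    have h2 : ∀ j : Fin 1, GI G ρ σ μ i (Sum.inr j) = σ * μ i := by
      intro j
      simp [GI, Matrix.fromCols]
    simp only [h1, h2]
    have : ∑ j : Fin r, (G i j - μ i * t j) ^ 2
        = ∑ j : Fin r, ((G i j) ^ 2 - μ i * (2 * (G i j * t j)) + (μ i) ^ 2 * (t j) ^ 2) :=
      Finset.sum_congr rfl fun j _ => by ring
    rw [this, Finset.sum_add_distrib, Finset.sum_sub_distrib, ← Finset.mul_sum,
      ← Finset.mul_sum, ← Finset.mul_sum, hb i, ha]
    simp only [Finset.sum_const, Finset.card_univ, Fintype.card_fin]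
    ring
  apply Real.sqrt_le_sqrt
  apply Finset.sum_le_sum
  intro i _
  rw [hrow, hrow]
  have hlamstar : (a⁻¹ • b) i = a⁻¹ * b i := rfl
  rw [hlamstar]
  exact quad_key a (b i) _ (lam i) hpos
end

section
/- (Generalization of Kühn's method, concrete form.) Let f : ℝ^{n} × ℝ^{m} → ℝ^{n} be such that x ↦ f(x,w) is continuously differentiable for each w. Let X = c_x ⊕ G_x B^{r_x} ⊂ ℝ^n be a zonotope and W ⊆ ℝ^m a set. Suppose: (i) there is a zonotope Z_q = c_q ⊕ G_q B^{r_q} with f(c_x, w) ∈ Z_q for all w ∈ W; (ii) there are matrices L, U ∈ ℝ^{n×n} with L ≤ ∂f/∂x (x,w) ≤ U entrywise for all x ∈ X and w ∈ W. Define M̄ := (1/2)(L+U) G_x ∈ ℝ^{n×r_x} and the diagonal matrix H ∈ ℝ^{n×n} with H_{ii} := (1/2) Σ_{j=1}^{r_x} Σ_{k=1}^{n} (U−L)_{ik} |(G_x)_{kj}|. Then for all x ∈ X and w ∈ W, f(x,w) ∈ c_q ⊕ [G_q M̄ H] B^{r_q + r_x + n}. -/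
open Matrix

/-- Generalization of Kühn's method: if `f(c_x, W) ⊆ c_q ⊕ G_q B^{r_q}` and the
Jacobian `∂f/∂x` is bounded entrywise by `L ≤ ∂f/∂x ≤ U` on `X × W`, then
`f(X, W) ⊆ c_q ⊕ [G_q  M̄  H] B^{r_q + r_x + n}`, where `M̄ = (1/2)(L+U)G_x` and
`H` is diagonal with `H_{ii} = (1/2) Σ_j Σ_k (U−L)_{ik} |(G_x)_{kj}|`. -/
theorem kuhn_generalization (n m rx rq : ℕ)
    (f : (Fin n → ℝ) → (Fin m → ℝ) → (Fin n → ℝ))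
    (cx : Fin n → ℝ) (Gx : Matrix (Fin n) (Fin rx) ℝ)
    (W : Set (Fin m → ℝ))
    (cq : Fin n → ℝ) (Gq : Matrix (Fin n) (Fin rq) ℝ)
    (L U : Matrix (Fin n) (Fin n) ℝ)
    (hdiff : ∀ w ∈ W, ContDiff ℝ 1 (fun x => f x w))
    (hq : ∀ w ∈ W, f cx w ∈ zonotope cq Gq)
    (hJ : ∀ w ∈ W, ∀ x ∈ zonotope cx Gx, ∀ i k,
      L i k ≤ fderiv ℝ (fun x => f x w) x (Pi.single k 1) i ∧
      fderiv ℝ (fun x => f x w) x (Pi.single k 1) i ≤ U i k) :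
    ∀ x ∈ zonotope cx Gx, ∀ w ∈ W,
      f x w ∈ zonotope cq
        (Matrix.fromCols Gq (Matrix.fromCols ((1 / 2 : ℝ) • ((L + U) * Gx))
          (Matrix.diagonal fun i => (1 / 2 : ℝ) * ∑ j, ∑ k, (U - L) i k * |Gx k j|))) := by
  rintro x ⟨b, hb, rfl⟩ w hw
  set v : Fin n → ℝ := Gx.mulVec b with hv
  set F : (Fin n → ℝ) → Fin n → ℝ := fun x => f x w with hF
  have hFd : Differentiable ℝ F := (hdiff w hw).differentiable one_ne_zero
  -- points on the segment are in the zonotope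
  have hmem : ∀ t : ℝ, t ∈ Set.Icc (0:ℝ) 1 → cx + t • v ∈ zonotope cx Gx := by
    intro t ht
    refine ⟨t • b, fun j => ?_, ?_⟩
    · simp only [Pi.smul_apply, smul_eq_mul, abs_mul]
      have h1 : |t| ≤ 1 := abs_le.2 ⟨by linarith [ht.1], ht.2⟩
      calc |t| * |b j| ≤ 1 * 1 := mul_le_mul h1 (hb j) (abs_nonneg _) zero_le_one
        _ = 1 := by ring
    · rw [Matrix.mulVec_smul]
  -- mean value theorem for each coordinate
  have hMVT : ∀ i : Fin n, ∃ c ∈ zonotope cx Gx,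
      F (cx + v) i - F cx i = ∑ k, v k * fderiv ℝ F c (Pi.single k 1) i := by
    intro i
    have hpath : ∀ t : ℝ, HasDerivAt (fun t : ℝ => cx + t • v) v t := by
      intro t
      simpa using ((hasDerivAt_id t).smul_const v).const_add cx
    have hder : ∀ t : ℝ, HasDerivAt (fun t : ℝ => F (cx + t • v) i)
        ((fderiv ℝ F (cx + t • v)) v i) t := by
      intro t
      have h1 : HasDerivAt (fun t : ℝ => F (cx + t • v))
          ((fderiv ℝ F (cx + t • v)) v) t :=
        (hFd.differentiableAt.hasFDerivAt).comp_hasDerivAt t (hpath t)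
      have h2 := (ContinuousLinearMap.proj (R := ℝ) (φ := fun _ : Fin n => ℝ)
        i).hasFDerivAt.comp_hasDerivAt t h1
      exact h2
    obtain ⟨θ, hθ, heq⟩ := exists_hasDerivAt_eq_slope
      (fun t : ℝ => F (cx + t • v) i) (fun t => (fderiv ℝ F (cx + t • v)) v i)
      (by norm_num : (0:ℝ) < 1)
      (fun t _ => (hder t).continuousAt.continuousWithinAt)
      (fun t _ => hder t)
    refine ⟨cx + θ • v, hmem θ ⟨hθ.1.le, hθ.2.le⟩, ?_⟩
    have hvdec : v = ∑ k, v k • (Pi.single k 1 : Fin n → ℝ) := by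
      ext j
      rw [Finset.sum_apply]
      simp [Pi.single_apply]
    have hvsum : (fderiv ℝ F (cx + θ • v)) v
        = ∑ k, v k • (fderiv ℝ F (cx + θ • v)) (Pi.single k 1) := by
      calc (fderiv ℝ F (cx + θ • v)) v
          = (fderiv ℝ F (cx + θ • v)) (∑ k, v k • (Pi.single k 1 : Fin n → ℝ)) := by
            rw [← hvdec]
        _ = ∑ k, v k • (fderiv ℝ F (cx + θ • v)) (Pi.single k 1) := by
            rw [map_sum]
            exact Finset.sum_congr rfl fun k _ =>
              (fderiv ℝ F (cx + θ • v)).map_smul _ _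
    simp only [one_smul, zero_smul, add_zero, sub_zero, div_one] at heq
    rw [← heq, hvsum]
    simp [Finset.sum_apply]
  choose c hc hceq using hMVT
  -- bounds
  have hJc : ∀ i k, L i k ≤ fderiv ℝ F (c i) (Pi.single k 1) i ∧
      fderiv ℝ F (c i) (Pi.single k 1) i ≤ U i k := fun i k => hJ w hw (c i) (hc i) i k
  set Mb : Fin n → ℝ := ((1 / 2 : ℝ) • ((L + U) * Gx)).mulVec b with hMb
  set H : Fin n → ℝ := fun i => (1 / 2 : ℝ) * ∑ j, ∑ k, (U - L) i k * |Gx k j| with hH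
  set s : Fin n → ℝ := fun i => F (cx + v) i - F cx i - Mb i with hs
  have hsbound : ∀ i, |s i| ≤ H i := by
    intro i
    have hMbi : Mb i = ∑ k, ((L i k + U i k) / 2) * v k := by
      rw [hMb, Matrix.smul_mulVec, ← Matrix.mulVec_mulVec]
      simp only [Pi.smul_apply, smul_eq_mul]
      have hLUv : ((L + U) *ᵥ v) i = ∑ k, (L i k + U i k) * v k := by
        simp [Matrix.mulVec, dotProduct, Matrix.add_apply]
      rw [hLUv, Finset.mul_sum]
      exact Finset.sum_congr rfl fun k _ => by ring
    have hsi : s i = ∑ k, (fderiv ℝ F (c i) (Pi.single k 1) i - (L i k + U i k) / 2) * v k := by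
      simp only [hs]
      rw [hceq i, hMbi, ← Finset.sum_sub_distrib]
      exact Finset.sum_congr rfl fun k _ => by ring
    rw [hsi]
    calc |∑ k, (fderiv ℝ F (c i) (Pi.single k 1) i - (L i k + U i k) / 2) * v k|
        ≤ ∑ k, |(fderiv ℝ F (c i) (Pi.single k 1) i - (L i k + U i k) / 2) * v k| :=
          Finset.abs_sum_le_sum_abs _ _
      _ ≤ ∑ k, ((U i k - L i k) / 2) * ∑ j, |Gx k j| := by
          refine Finset.sum_le_sum fun k _ => ?_
          rw [abs_mul]
          refine mul_le_mul ?_ ?_ (abs_nonneg _) ?_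
          · rw [abs_le]
            exact ⟨by linarith [(hJc i k).1], by linarith [(hJc i k).2]⟩
          · rw [hv]
            calc |Matrix.mulVec Gx b k| = |∑ j, Gx k j * b j| := by
                  simp [Matrix.mulVec, dotProduct]
              _ ≤ ∑ j, |Gx k j * b j| := Finset.abs_sum_le_sum_abs _ _
              _ ≤ ∑ j, |Gx k j| := by
                  refine Finset.sum_le_sum fun j _ => ?_
                  rw [abs_mul]
                  calc |Gx k j| * |b j| ≤ |Gx k j| * 1 :=
                        mul_le_mul_of_nonneg_left (hb j) (abs_nonneg _)
                    _ = |Gx k j| := mul_one _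
          · linarith [(hJc i k).1, (hJc i k).2]
      _ = H i := by
          have hHi : H i = ∑ j, ∑ k, (1 / 2 : ℝ) * ((U - L) i k * |Gx k j|) := by
            simp only [hH, Finset.mul_sum]
          rw [hHi, Finset.sum_comm]
          refine Finset.sum_congr rfl fun k _ => ?_
          rw [Finset.mul_sum]
          refine Finset.sum_congr rfl fun j _ => ?_
          simp only [Matrix.sub_apply]
          ring
  -- the error coefficients
  set e : Fin n → ℝ := fun i => if H i = 0 then 0 else s i / H i with he
  have hHe : ∀ i, H i * e i = s i := by
    intro i
    by_cases h : H i = 0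
    · have hs0 : s i = 0 :=
        abs_eq_zero.mp (le_antisymm (by simpa [h] using hsbound i) (abs_nonneg _))
      simp [he, h, hs0]
    · simp only [he, h, if_false]
      field_simp
  have hebound : ∀ i, |e i| ≤ 1 := by
    intro i
    by_cases h : H i = 0
    · simp [he, h]
    · simp only [he, h, if_false]
      have hHpos : 0 < H i := lt_of_le_of_ne (le_trans (abs_nonneg _) (hsbound i)) (Ne.symm h)
      rw [abs_div, abs_of_pos hHpos, div_le_one hHpos]
      exact hsbound i
  -- the generator-coefficient vector for f cx w
  obtain ⟨bq, hbq, hbqeq⟩ := hq w hw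
  refine ⟨Sum.elim bq (Sum.elim b e), ?_, ?_⟩
  · rintro (j | j | j)
    · exact hbq j
    · exact hb j
    · exact hebound j
  · rw [Matrix.fromCols_mulVec_sumElim, Matrix.fromCols_mulVec_sumElim]
    funext i
    have h1 : f (cx + v) w i = F cx i + Mb i + s i := by
      show F (cx + v) i = _
      simp only [hs]
      ring
    have h2 : F cx i = cq i + Gq.mulVec bq i := by
      show f cx w i = _
      rw [hbqeq]
      rfl
    have h3 : (Matrix.diagonal H).mulVec e i = s i := by
      rw [Matrix.mulVec_diagonal]; exact hHe i
    simp only [Pi.add_apply]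
    rw [h1, h2, ← h3, ← hMb]
    ring
end

section
/- (Zonotope inclusion.) Let c ∈ ℝ^n and let G_L, G_U ∈ ℝ^{n×r} with G_L ≤ G_U entrywise. Define the family of zonotopes Ẑ := {c + G b : G ∈ ℝ^{n×r}, G_L ≤ G ≤ G_U entrywise, b ∈ B^r}, the midpoint matrix G_mid := (1/2)(G_L + G_U), and the diagonal matrix H ∈ ℝ^{n×n} with H_{ii} := (1/2) Σ_{j=1}^{r} (G_U − G_L)_{ij}. Then Ẑ ⊆ c ⊕ [G_mid H] B^{n+r}, i.e., for every G with G_L ≤ G ≤ G_U and every b ∈ B^r there exists b' ∈ B^{n+r} with c + G b = c + [G_mid H] b'. -/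
open Matrix

/-- Zonotope inclusion: the family of zonotopes `{c + Gb : G_L ≤ G ≤ G_U, b ∈ B^r}`
is contained in the zonotope `c ⊕ [G_mid  H] B^{n+r}`, where
`G_mid = (1/2)(G_L + G_U)` and `H` is diagonal with
`H_{ii} = (1/2) Σ_j (G_U − G_L)_{ij}`. -/
theorem zonotope_inclusion (n r : ℕ) (c : Fin n → ℝ)
    (Glo Gup : Matrix (Fin n) (Fin r) ℝ) (hLU : ∀ i j, Glo i j ≤ Gup i j)
    (G : Matrix (Fin n) (Fin r) ℝ)
    (hGlo : ∀ i j, Glo i j ≤ G i j) (hGup : ∀ i j, G i j ≤ Gup i j)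
    (b : Fin r → ℝ) (hb : ∀ j, |b j| ≤ 1) :
    ∃ b' : (Fin r ⊕ Fin n) → ℝ, (∀ j, |b' j| ≤ 1) ∧
      c + G.mulVec b =
        c + (Matrix.fromCols ((1 / 2 : ℝ) • (Glo + Gup))
          (Matrix.diagonal fun i => (1 / 2 : ℝ) * ∑ j, (Gup - Glo) i j)).mulVec b' := by
  set H : Fin n → ℝ := fun i => (1 / 2 : ℝ) * ∑ j, (Gup - Glo) i j with hH
  set d : Fin n → ℝ := fun i => ∑ j, (G i j - (1/2) * (Glo i j + Gup i j)) * b j with hd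
  have hdH : ∀ i, |d i| ≤ H i := by
    intro i
    calc |d i| ≤ ∑ j, |(G i j - (1/2) * (Glo i j + Gup i j)) * b j| :=
          Finset.abs_sum_le_sum_abs _ _
      _ ≤ ∑ j, (1/2) * (Gup i j - Glo i j) := by
          apply Finset.sum_le_sum
          intro j _
          rw [abs_mul]
          have h1 : |G i j - (1/2) * (Glo i j + Gup i j)| ≤ (1/2) * (Gup i j - Glo i j) := by
            rw [abs_le]
            constructor <;> nlinarith [hGlo i j, hGup i j]
          calc |G i j - (1/2) * (Glo i j + Gup i j)| * |b j|
              ≤ ((1/2) * (Gup i j - Glo i j)) * 1 := by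
                apply mul_le_mul h1 (hb j) (abs_nonneg _)
                nlinarith [hLU i j]
            _ = (1/2) * (Gup i j - Glo i j) := mul_one _
      _ = H i := by rw [hH]; simp [Matrix.sub_apply, Finset.mul_sum, mul_sub]
  set v : Fin n → ℝ := fun i => if H i = 0 then 0 else d i / H i with hv
  refine ⟨Sum.elim b v, ?_, ?_⟩
  · rintro (j | i)
    · exact hb j
    · simp only [Sum.elim_inr, hv]
      by_cases h : H i = 0
      · simp [h]
      · have hpos : 0 < H i := lt_of_le_of_ne (le_trans (abs_nonneg _) (hdH i)) (Ne.symm h)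
        simp only [h, if_false, abs_div, abs_of_pos hpos]
        rw [div_le_one hpos]
        exact hdH i
  · have hHv : ∀ i, H i * v i = d i := by
      intro i
      by_cases h : H i = 0
      · have : |d i| ≤ 0 := h ▸ hdH i
        have : d i = 0 := abs_nonpos_iff.mp this
        simp [hv, h, this]
      · simp [hv, h]
        field_simp
    rw [Matrix.fromCols_mulVec_sumElim]
    funext i
    simp only [Pi.add_apply, Matrix.mulVec, dotProduct, Matrix.smul_apply,
      Matrix.add_apply, smul_eq_mul]
    simp only [Matrix.diagonal_apply, ite_mul, zero_mul, Finset.sum_ite_eq, Finset.mem_univ,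
      if_true]
    have : ∑ j, G i j * b j = (∑ j, (1/2) * (Glo i j + Gup i j) * b j) + d i := by
      rw [hd]
      rw [← Finset.sum_add_distrib]
      congr 1; funext j; ring
    rw [this, hHv i]
end

section
/- (Correctness of zonotope order reduction.) Let c ∈ ℝ^n and G ∈ ℝ^{n×r}, and partition G = [H_T H_R] where H_T ∈ ℝ^{n×p} consists of the first p columns of G and H_R ∈ ℝ^{n×(r−p)} of the remaining columns. Define the diagonal matrix Q ∈ ℝ^{n×n} with Q_{ii} := Σ_{j=1}^{r−p} |H_R(i,j)|. Then c ⊕ G B^r ⊆ c ⊕ [H_T Q] B^{p+n}; i.e., the reduced zonotope of order p+n contains the original zonotope of order r. -/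
open Matrix

/-- Correctness of zonotope order reduction: partitioning `G = [H_T  H_R]` and
replacing `H_R` by the diagonal matrix `Q` with `Q_{ii} = Σ_j |H_R(i,j)|` yields
a lower-order zonotope containing the original one. -/
theorem zonotope_order_reduction (n p q : ℕ) (c : Fin n → ℝ)
    (HT : Matrix (Fin n) (Fin p) ℝ) (HR : Matrix (Fin n) (Fin q) ℝ) :
    zonotope c (Matrix.fromCols HT HR) ⊆
      zonotope c (Matrix.fromCols HT
        (Matrix.diagonal fun i => ∑ j, |HR i j|)) := by
  rintro x ⟨b, hb, rfl⟩
  set S : Fin n → ℝ := fun i => ∑ j, |HR i j| with hS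
  refine ⟨Sum.elim (fun j => b (Sum.inl j))
      (fun i => HR.mulVec (fun j => b (Sum.inr j)) i / S i), ?_, ?_⟩
  · rintro (j | i)
    · exact hb _
    · simp only [Sum.elim_inr]
      have hSnn : 0 ≤ S i := Finset.sum_nonneg fun j _ => abs_nonneg _
      have hbd : |HR.mulVec (fun j => b (Sum.inr j)) i| ≤ S i := by
        calc |∑ j, HR i j * b (Sum.inr j)| ≤ ∑ j, |HR i j * b (Sum.inr j)| :=
              Finset.abs_sum_le_sum_abs _ _
          _ ≤ ∑ j, |HR i j| := by
              refine Finset.sum_le_sum fun j _ => ?_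
              rw [abs_mul]
              exact mul_le_of_le_one_right (abs_nonneg _) (hb _)
      rw [abs_div, abs_of_nonneg hSnn]
      rcases eq_or_lt_of_le hSnn with h | h
      · simp [← h]
      · rw [div_le_one h]; exact hbd
  · have hb' : b = Sum.elim (fun j => b (Sum.inl j)) (fun j => b (Sum.inr j)) := by
      ext (j | j) <;> rfl
    rw [hb', Matrix.fromCols_mulVec_sumElim, Matrix.fromCols_mulVec_sumElim]
    ext i
    simp only [Pi.add_apply]
    congr 2
    rw [Matrix.mulVec_diagonal]
    rcases eq_or_ne (S i) 0 with h | h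
    · have : ∀ j, HR i j = 0 := by
        intro j
        have := (Finset.sum_eq_zero_iff_of_nonneg (fun j _ => abs_nonneg (HR i j))).mp h
        simpa using this j (Finset.mem_univ j)
      simp [Matrix.mulVec, dotProduct, this, h]
    · field_simp
      rfl
end

section
/- (Lyapunov characterization of the half-plane LMI region.) Let A ∈ ℝ^{n×n} and ε ∈ ℝ. All eigenvalues λ ∈ ℂ of A satisfy Re λ > ε if and only if there exists a symmetric positive definite matrix T ∈ ℝ^{n×n} such that T Aᵀ + A T − 2ε T is positive definite. -/
open Matrix

attribute [local instance] Matrix.linftyOpNormedAddCommGroup Matrix.linftyOpNormedRing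
  Matrix.linftyOpNormedAlgebra

namespace HLyap

open Complex

variable {n : ℕ}

noncomputable def cplx (M : Matrix (Fin n) (Fin n) ℝ) : Matrix (Fin n) (Fin n) ℂ :=
  M.map Complex.ofReal

lemma cplx_apply (M : Matrix (Fin n) (Fin n) ℝ) (i j) : cplx M i j = (M i j : ℂ) := rfl

lemma cplx_add (M N : Matrix (Fin n) (Fin n) ℝ) : cplx (M + N) = cplx M + cplx N := by
  ext i j; simp [cplx]

lemma cplx_sub (M N : Matrix (Fin n) (Fin n) ℝ) : cplx (M - N) = cplx M - cplx N := by
  ext i j; simp [cplx]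

lemma cplx_mul (M N : Matrix (Fin n) (Fin n) ℝ) : cplx (M * N) = cplx M * cplx N :=
  Matrix.map_mul (f := Complex.ofRealHom)

lemma cplx_transpose (M : Matrix (Fin n) (Fin n) ℝ) : cplx Mᵀ = (cplx M)ᵀ :=
  Matrix.transpose_map

lemma cplx_conjTranspose (M : Matrix (Fin n) (Fin n) ℝ) : (cplx M)ᴴ = cplx Mᵀ := by
  ext i j; simp [cplx, Matrix.conjTranspose_apply]

lemma cplx_eq_zero {M : Matrix (Fin n) (Fin n) ℝ} (h : cplx M = 0) : M = 0 := by
  ext i j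
  have := Matrix.ext_iff.mpr h i j
  simpa [cplx] using this

lemma cplx_smul (c : ℝ) (M : Matrix (Fin n) (Fin n) ℝ) :
    cplx (c • M) = (c : ℂ) • cplx M := by
  ext i j; simp [cplx]

lemma cplx_one : cplx (1 : Matrix (Fin n) (Fin n) ℝ) = 1 :=
  Matrix.map_one _ (by simp) (by simp)

lemma sym_of_herm {M : Matrix (Fin n) (Fin n) ℝ} (h : M.IsHermitian) : Mᵀ = M := by
  have := h.eq
  ext i j; simpa using (congrFun (congrFun this j) i).symm

/-- transpose has the same spectrum -/
lemma spectrum_transpose (M : Matrix (Fin n) (Fin n) ℂ) :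
    spectrum ℂ Mᵀ = spectrum ℂ M := by
  have key : ∀ μ : ℂ, IsUnit (algebraMap ℂ _ μ - Mᵀ) ↔ IsUnit (algebraMap ℂ _ μ - M) := by
    intro μ
    rw [Matrix.isUnit_iff_isUnit_det, Matrix.isUnit_iff_isUnit_det,
      show algebraMap ℂ _ μ - Mᵀ = (algebraMap ℂ _ μ - M)ᵀ by
        rw [Matrix.transpose_sub]; congr 1
        simp [Matrix.algebraMap_eq_diagonal],
      Matrix.det_transpose]
  ext μ
  simp only [spectrum.mem_iff, not_iff_not, key]

/-- quadratic form of a complexified symmetric posdef matrix on a nonzero complex vector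
is a positive real -/
lemma quadform_cplx_pos {M : Matrix (Fin n) (Fin n) ℝ} (hsym : Mᵀ = M)
    (hpos : ∀ y : Fin n → ℝ, y ≠ 0 → 0 < y ⬝ᵥ (M *ᵥ y))
    (x : Fin n → ℂ) (hx : x ≠ 0) :
    ∃ r : ℝ, 0 < r ∧ star x ⬝ᵥ (cplx M *ᵥ x) = (r : ℂ) := by
  classical
  set a : Fin n → ℝ := fun i => (x i).re with ha
  set b : Fin n → ℝ := fun i => (x i).im with hb
  set av : Fin n → ℂ := fun i => ((a i : ℝ) : ℂ) with hav
  set bv : Fin n → ℂ := fun i => ((b i : ℝ) : ℂ) with hbv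
  have hxdecomp : x = av + Complex.I • bv := by
    funext i
    simp [hav, hbv, ha, hb, Complex.ext_iff]
  have hstar : star x = av - Complex.I • bv := by
    funext i
    simp [hav, hbv, ha, hb, Complex.ext_iff]
  -- real quadratic forms transfer
  have hreal : ∀ y z : Fin n → ℝ,
      (fun i => ((y i : ℝ) : ℂ)) ⬝ᵥ (cplx M *ᵥ fun i => ((z i : ℝ) : ℂ))
        = ((y ⬝ᵥ (M *ᵥ z) : ℝ) : ℂ) := by
    intro y z
    simp only [dotProduct, Matrix.mulVec, cplx_apply]
    push_cast
    rfl
  -- symmetric cancellation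
  have hsymc : (cplx M)ᵀ = cplx M := by rw [← cplx_transpose, hsym]
  have hcross : av ⬝ᵥ (cplx M *ᵥ bv) = bv ⬝ᵥ (cplx M *ᵥ av) := by
    rw [Matrix.dotProduct_mulVec, ← Matrix.mulVec_transpose, hsymc, dotProduct_comm]
  have expand : star x ⬝ᵥ (cplx M *ᵥ x)
      = av ⬝ᵥ (cplx M *ᵥ av) + bv ⬝ᵥ (cplx M *ᵥ bv) := by
    rw [hstar, hxdecomp]
    simp only [Matrix.mulVec_add, Matrix.mulVec_smul, dotProduct_add, dotProduct_smul,
      sub_dotProduct, smul_dotProduct, smul_eq_mul]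
    rw [hcross]
    ring_nf
    rw [Complex.I_sq]
    ring
  have hnonneg : ∀ y : Fin n → ℝ, 0 ≤ y ⬝ᵥ (M *ᵥ y) := by
    intro y
    by_cases hy : y = 0
    · simp [hy]
    · exact (hpos y hy).le
  have hab : a ≠ 0 ∨ b ≠ 0 := by
    by_contra hcon
    push_neg at hcon
    apply hx
    funext i
    have h1 := congrFun hcon.1 i
    have h2 := congrFun hcon.2 i
    simp only [ha, hb, Pi.zero_apply] at h1 h2
    exact Complex.ext h1 h2
  refine ⟨a ⬝ᵥ (M *ᵥ a) + b ⬝ᵥ (M *ᵥ b), ?_, ?_⟩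
  · rcases hab with h | h
    · have := hpos a h
      have := hnonneg b
      linarith
    · have := hpos b h
      have := hnonneg a
      linarith
  · rw [expand, hreal, hreal]
    push_cast
    ring





 

variable {n : ℕ}

lemma eigvec_of_mem_spectrum {M : Matrix (Fin n) (Fin n) ℂ} {μ : ℂ}
    (h : μ ∈ spectrum ℂ M) : ∃ v : Fin n → ℂ, v ≠ 0 ∧ M *ᵥ v = μ • v := by
  have h' : μ ∈ spectrum ℂ (Matrix.toLinAlgEquiv' M) := by
    rwa [AlgEquiv.spectrum_eq]
  have hev : Module.End.HasEigenvalue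
      (Matrix.toLinAlgEquiv' M : Module.End ℂ (Fin n → ℂ)) μ :=
    Module.End.hasEigenvalue_iff_mem_spectrum.mpr h'
  obtain ⟨v, hv⟩ := hev.exists_hasEigenvector
  refine ⟨v, hv.right, ?_⟩
  have := hv.apply_eq_smul
  simpa [Matrix.toLinAlgEquiv'_apply] using this

lemma backward (A : Matrix (Fin n) (Fin n) ℝ) (ε : ℝ) (T : Matrix (Fin n) (Fin n) ℝ)
    (hT : T.PosDef) (hQ : (T * Aᵀ + A * T - (2 * ε) • T).PosDef) :
    ∀ μ ∈ spectrum ℂ (cplx A), ε < μ.re := by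
  intro μ hμ
  set Q : Matrix (Fin n) (Fin n) ℝ := T * Aᵀ + A * T - (2 * ε) • T with hQdef
  have hμt : μ ∈ spectrum ℂ (cplx A)ᵀ := by rwa [spectrum_transpose]
  obtain ⟨v, hv0, hv⟩ := eigvec_of_mem_spectrum hμt
  -- symmetric forms
  have hsymT : Tᵀ = T := sym_of_herm hT.1
  have hsymQ : Qᵀ = Q := sym_of_herm hQ.1
  have hTform : ∀ y : Fin n → ℝ, y ≠ 0 → 0 < y ⬝ᵥ (T *ᵥ y) := by
    intro y hy; simpa using hT.dotProduct_mulVec_pos hy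
  have hQform : ∀ y : Fin n → ℝ, y ≠ 0 → 0 < y ⬝ᵥ (Q *ᵥ y) := by
    intro y hy; simpa using hQ.dotProduct_mulVec_pos hy
  obtain ⟨rT, hrT, hT'⟩ := quadform_cplx_pos hsymT hTform v hv0
  obtain ⟨rQ, hrQ, hQ'⟩ := quadform_cplx_pos hsymQ hQform v hv0
  -- key identity
  have hstarv : star ((cplx A)ᵀ *ᵥ v) = Matrix.vecMul (star v) (cplx A) := by
    rw [Matrix.star_mulVec]
    congr 1
    rw [← cplx_transpose, cplx_conjTranspose, Matrix.transpose_transpose]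
  have key : star v ⬝ᵥ (cplx Q *ᵥ v)
      = (μ + (starRingEnd ℂ) μ - 2 * ε) * (star v ⬝ᵥ (cplx T *ᵥ v)) := by
    have hQc : cplx Q = cplx T * (cplx A)ᵀ + cplx A * cplx T
        - ((2 * ε : ℝ) : ℂ) • cplx T := by
      rw [hQdef, cplx_sub, cplx_add, cplx_mul, cplx_mul, cplx_smul, cplx_transpose]
    rw [hQc]
    have t1 : star v ⬝ᵥ ((cplx T * (cplx A)ᵀ) *ᵥ v) = μ * (star v ⬝ᵥ (cplx T *ᵥ v)) := by
      rw [← Matrix.mulVec_mulVec, hv, Matrix.mulVec_smul, dotProduct_smul, smul_eq_mul]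
    have t2 : star v ⬝ᵥ ((cplx A * cplx T) *ᵥ v)
        = (starRingEnd ℂ) μ * (star v ⬝ᵥ (cplx T *ᵥ v)) := by
      calc star v ⬝ᵥ ((cplx A * cplx T) *ᵥ v)
          = star v ⬝ᵥ (cplx A *ᵥ (cplx T *ᵥ v)) := by rw [Matrix.mulVec_mulVec]
        _ = (star v ᵥ* cplx A) ⬝ᵥ (cplx T *ᵥ v) := by rw [Matrix.dotProduct_mulVec]
        _ = star ((cplx A)ᵀ *ᵥ v) ⬝ᵥ (cplx T *ᵥ v) := by rw [hstarv]
        _ = star (μ • v) ⬝ᵥ (cplx T *ᵥ v) := by rw [hv]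
        _ = (starRingEnd ℂ) μ * (star v ⬝ᵥ (cplx T *ᵥ v)) := by
            rw [star_smul, smul_dotProduct]; simp
    rw [Matrix.sub_mulVec, Matrix.add_mulVec, dotProduct_sub, dotProduct_add, t1, t2,
      Matrix.smul_mulVec, dotProduct_smul]
    simp only [smul_eq_mul]
    push_cast
    ring
  rw [hT', hQ'] at key
  have hconj : μ + (starRingEnd ℂ) μ = ((2 * μ.re : ℝ) : ℂ) := by
    exact_mod_cast Complex.add_conj μ
  rw [hconj] at key
  have keyR : rQ = (2 * μ.re - 2 * ε) * rT := by exact_mod_cast key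
  nlinarith





 

variable {n : ℕ}

/-- Sylvester operator injectivity over ℂ: if all eigenvalues of `C` have positive
real part, then `C X + X Cᵀ = 0` implies `X = 0`. -/
lemma sylvester_inj_complex (C : Matrix (Fin n) (Fin n) ℂ)
    (hC : ∀ μ ∈ spectrum ℂ C, 0 < μ.re)
    (X : Matrix (Fin n) (Fin n) ℂ) (hX : C * X + X * Cᵀ = 0) : X = 0 := by
  classical
  set f : Module.End ℂ (Fin n → ℂ) := Matrix.toLinAlgEquiv' Cᵀ with hf
  have hspec : spectrum ℂ f = spectrum ℂ C := by
    rw [hf, AlgEquiv.spectrum_eq, spectrum_transpose]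
  -- key: X kills every generalized eigenvector of f
  have hker : ∀ μ : ℂ, ∀ k : ℕ, ∀ v : Fin n → ℂ,
      ((f - μ • (1 : Module.End ℂ (Fin n → ℂ))) ^ k) v = 0 → X *ᵥ v = 0 := by
    intro μ k
    induction k with
    | zero => intro v hv; simp only [pow_zero, Module.End.one_apply] at hv; simp [hv]
    | succ k ih =>
      intro v hv
      by_cases hμ : μ ∈ spectrum ℂ C
      · -- C + μ•1 is invertible
        have hμpos : 0 < μ.re := hC μ hμ
        have hunit : IsUnit (C + μ • (1 : Matrix (Fin n) (Fin n) ℂ)) := by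
          by_contra hcon
          have hmem : -μ ∈ spectrum ℂ C := by
            rw [spectrum.mem_iff]
            intro habs
            apply hcon
            have : algebraMap ℂ (Matrix (Fin n) (Fin n) ℂ) (-μ) - C
                = -(C + μ • (1 : Matrix (Fin n) (Fin n) ℂ)) := by
              rw [Matrix.algebraMap_eq_diagonal]
              ext i j
              by_cases hij : i = j <;>
                simp [Matrix.diagonal_apply, hij, Matrix.one_apply, Matrix.smul_apply]
          <;> ring
            rw [this] at habs
            exact (IsUnit.neg_iff _).mp habs
          have := hC _ hmem
          simp only [Complex.neg_re] at this
          linarith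
        -- the inductive step
        have hw : X *ᵥ ((f - μ • (1 : Module.End ℂ (Fin n → ℂ))) v) = 0 := by
          apply ih
          have : ((f - μ • (1 : Module.End ℂ (Fin n → ℂ))) ^ k)
              ((f - μ • (1 : Module.End ℂ (Fin n → ℂ))) v)
              = ((f - μ • (1 : Module.End ℂ (Fin n → ℂ))) ^ (k+1)) v := by
            rw [pow_succ, Module.End.mul_apply]
          rw [this, hv]
        have hfv : (f - μ • (1 : Module.End ℂ (Fin n → ℂ))) v = Cᵀ *ᵥ v - μ • v := by
          simp [hf, Matrix.toLinAlgEquiv'_apply, LinearMap.sub_apply]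
        rw [hfv] at hw
        have hw' : X *ᵥ (Cᵀ *ᵥ v) = μ • (X *ᵥ v) := by
          have := hw
          rw [Matrix.mulVec_sub, Matrix.mulVec_smul, sub_eq_zero] at this
          exact this
        -- use the Sylvester equation
        have heq : C *ᵥ (X *ᵥ v) + μ • (X *ᵥ v) = 0 := by
          have h0 : (C * X + X * Cᵀ) *ᵥ v = 0 := by rw [hX]; simp
          rw [Matrix.add_mulVec, ← Matrix.mulVec_mulVec, ← Matrix.mulVec_mulVec, hw'] at h0
          exact h0
        have heq2 : (C + μ • (1 : Matrix (Fin n) (Fin n) ℂ)) *ᵥ (X *ᵥ v) = 0 := by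
          rw [Matrix.add_mulVec, Matrix.smul_mulVec, Matrix.one_mulVec]
          exact heq
        have hinj := (Matrix.mulVec_injective_iff_isUnit.mpr hunit)
        have : (C + μ • (1 : Matrix (Fin n) (Fin n) ℂ)) *ᵥ (X *ᵥ v)
            = (C + μ • (1 : Matrix (Fin n) (Fin n) ℂ)) *ᵥ 0 := by
          rw [heq2, Matrix.mulVec_zero]
        exact hinj this
      · -- μ is not an eigenvalue: v must be 0
        have hvz : v = 0 := by
          by_contra hv0
          have : Module.End.HasEigenvalue f μ := by
            apply Module.End.hasEigenvalue_of_hasGenEigenvalue (k := k + 1)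
            intro hbot
            apply hv0
            have hvk : v ∈ f.genEigenspace μ (k+1 : ℕ) :=
              Module.End.mem_genEigenspace_nat.mpr hv
            rw [hbot] at hvk
            simpa using hvk
          rw [Module.End.hasEigenvalue_iff_mem_spectrum, hspec] at this
          exact hμ this
        simp [hvz]
  -- conclude X = 0 from iSup of max generalized eigenspaces = ⊤
  have htop := Module.End.iSup_maxGenEigenspace_eq_top f
  have hXzero : ∀ v : Fin n → ℂ, X *ᵥ v = 0 := by
    intro v
    have hv : v ∈ (⊤ : Submodule ℂ (Fin n → ℂ)) := Submodule.mem_top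
    rw [← htop] at hv
    have hle : (⨆ μ : ℂ, f.maxGenEigenspace μ) ≤ LinearMap.ker (Matrix.mulVecLin X) := by
      apply iSup_le
      intro μ w hw
      rw [Module.End.mem_maxGenEigenspace] at hw
      obtain ⟨k, hk⟩ := hw
      exact hker μ k w hk
    have := hle hv
    simpa using this
  ext i j
  have := hXzero (Pi.single j 1)
  have h2 := congrFun this i
  simpa [Matrix.mulVec_single] using h2






 

variable {n : ℕ}

lemma herm_of_sym {M : Matrix (Fin n) (Fin n) ℝ} (h : Mᵀ = M) : M.IsHermitian := by
  show Mᴴ = M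
  ext i j
  simp only [Matrix.conjTranspose_apply, star_trivial]
  exact Matrix.ext_iff.mpr h i j

lemma sylvester_inj_real (C : Matrix (Fin n) (Fin n) ℝ)
    (hC : ∀ μ ∈ spectrum ℂ (cplx C), 0 < μ.re)
    (X : Matrix (Fin n) (Fin n) ℝ) (hX : C * X + X * Cᵀ = 0) : X = 0 := by
  apply cplx_eq_zero
  apply sylvester_inj_complex (cplx C) hC
  rw [← cplx_transpose, ← cplx_mul, ← cplx_mul, ← cplx_add, hX]
  ext i j; simp [cplx]

lemma spectrum_shift (M : Matrix (Fin n) (Fin n) ℂ) (c μ : ℂ) :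
    μ ∈ spectrum ℂ (M + c • (1 : Matrix (Fin n) (Fin n) ℂ)) ↔ μ - c ∈ spectrum ℂ M := by
  rw [spectrum.mem_iff, spectrum.mem_iff]
  have key : algebraMap ℂ (Matrix (Fin n) (Fin n) ℂ) μ - (M + c • 1)
      = algebraMap ℂ (Matrix (Fin n) (Fin n) ℂ) (μ - c) - M := by
    rw [Matrix.algebraMap_eq_diagonal, Matrix.algebraMap_eq_diagonal]
    ext i j
    by_cases hij : i = j <;>
      simp [Matrix.diagonal_apply, hij, Matrix.one_apply, Matrix.smul_apply] <;> ring
  rw [key]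

/-- The Sylvester operator `X ↦ C X + X Cᵀ`. -/
noncomputable def sylv (C : Matrix (Fin n) (Fin n) ℝ) :
    Matrix (Fin n) (Fin n) ℝ →ₗ[ℝ] Matrix (Fin n) (Fin n) ℝ :=
  LinearMap.mulLeft ℝ C + LinearMap.mulRight ℝ Cᵀ

lemma sylv_apply (C X : Matrix (Fin n) (Fin n) ℝ) : sylv C X = C * X + X * Cᵀ := rfl

lemma sylv_bijective (C : Matrix (Fin n) (Fin n) ℝ)
    (hC : ∀ μ ∈ spectrum ℂ (cplx C), 0 < μ.re) : Function.Bijective (sylv C) := by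
  have hinj : Function.Injective (sylv C) := by
    intro X Y h
    have h0 : sylv C (X - Y) = 0 := by rw [map_sub, h, sub_self]
    rw [sylv_apply] at h0
    have := sylvester_inj_real C hC (X - Y) h0
    exact sub_eq_zero.mp this
  exact ⟨hinj, LinearMap.injective_iff_surjective.mp hinj⟩

lemma sylv_shift (C : Matrix (Fin n) (Fin n) ℝ) (s : ℝ)
    (X : Matrix (Fin n) (Fin n) ℝ) :
    sylv (C + s • 1) X = sylv C X + (2 * s) • X := by
  simp only [sylv_apply, Matrix.transpose_add, Matrix.transpose_smul, Matrix.transpose_one,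
    add_mul, mul_add, Matrix.smul_mul, Matrix.mul_smul, one_mul, mul_one, two_mul]
  module

lemma sylv_symm (C : Matrix (Fin n) (Fin n) ℝ) (hinj : Function.Injective (sylv C))
    (T : Matrix (Fin n) (Fin n) ℝ) (hT : sylv C T = 1) : Tᵀ = T := by
  apply hinj
  rw [hT, sylv_apply]
  have : C * Tᵀ + Tᵀ * Cᵀ = (C * T + T * Cᵀ)ᵀ := by
    rw [Matrix.transpose_add, Matrix.transpose_mul, Matrix.transpose_mul,
      Matrix.transpose_transpose]
    exact add_comm _ _
  rw [this, ← sylv_apply, hT, Matrix.transpose_one]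

/-- quadratic form bound by operator norm -/
lemma quad_bound (R : Matrix (Fin n) (Fin n) ℝ) (x : Fin n → ℝ) :
    |x ⬝ᵥ (R *ᵥ x)| ≤ (n : ℝ) * ‖R‖ * (‖x‖ * ‖x‖) := by
  calc |x ⬝ᵥ (R *ᵥ x)| ≤ ∑ i, |x i * (R *ᵥ x) i| := by
        exact Finset.abs_sum_le_sum_abs _ _
    _ ≤ ∑ _i : Fin n, ‖x‖ * (‖R‖ * ‖x‖) := by
        apply Finset.sum_le_sum
        intro i _
        rw [abs_mul]
        have h1 : |x i| ≤ ‖x‖ := by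
          have := norm_le_pi_norm x i
          simpa [Real.norm_eq_abs] using this
        have h2 : |(R *ᵥ x) i| ≤ ‖R‖ * ‖x‖ := by
          have h3 : ‖(R *ᵥ x) i‖ ≤ ‖R *ᵥ x‖ := norm_le_pi_norm _ i
          have h4 : ‖R *ᵥ x‖ ≤ ‖R‖ * ‖x‖ := Matrix.linfty_opNorm_mulVec _ _
          calc |(R *ᵥ x) i| = ‖(R *ᵥ x) i‖ := (Real.norm_eq_abs _).symm
            _ ≤ ‖R‖ * ‖x‖ := le_trans h3 h4
        exact mul_le_mul h1 h2 (abs_nonneg _) (norm_nonneg _)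
    _ = (n : ℝ) * ‖R‖ * (‖x‖ * ‖x‖) := by
        rw [Finset.sum_const, Finset.card_univ, Fintype.card_fin, nsmul_eq_mul]
        ring

lemma norm_sq_le_dotProduct (hn : 0 < n) (x : Fin n → ℝ) : ‖x‖ * ‖x‖ ≤ x ⬝ᵥ x := by
  haveI : Nonempty (Fin n) := Fin.pos_iff_nonempty.mp hn
  obtain ⟨i, _, hi⟩ := Finset.exists_mem_eq_sup (Finset.univ : Finset (Fin n))
    Finset.univ_nonempty (fun i => ‖x i‖₊)
  have hnorm : ‖x‖ = |x i| := by
    rw [Pi.norm_def, hi]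
    simp [Real.norm_eq_abs]
  rw [hnorm]
  have : |x i| * |x i| = x i * x i := by rw [← abs_mul, abs_mul_self]
  rw [this]
  have : x ⬝ᵥ x = ∑ j, x j * x j := rfl
  rw [this]
  exact Finset.single_le_sum (f := fun j => x j * x j) (fun j _ => mul_self_nonneg _)
    (Finset.mem_univ i)

/-- The set of matrices with positive definite quadratic form is open. -/
lemma isOpen_posform (hn : 0 < n) :
    IsOpen {M : Matrix (Fin n) (Fin n) ℝ | ∀ x : Fin n → ℝ, x ≠ 0 → 0 < x ⬝ᵥ (M *ᵥ x)} := by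
  haveI : Nonempty (Fin n) := Fin.pos_iff_nonempty.mp hn
  refine Metric.isOpen_iff.mpr ?_
  intro M hM
  have hcont : Continuous fun x : Fin n → ℝ => x ⬝ᵥ (M *ᵥ x) := by
    simp only [dotProduct, Matrix.mulVec]
    exact continuous_finset_sum _ fun i _ =>
      (continuous_apply i).mul (continuous_finset_sum _ fun j _ =>
        (continuous_const.mul (continuous_apply j)))
  have hsph : IsCompact (Metric.sphere (0 : Fin n → ℝ) 1) := isCompact_sphere _ _
  have hne : (Metric.sphere (0 : Fin n → ℝ) 1).Nonempty :=
    NormedSpace.sphere_nonempty.mpr zero_le_one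
  obtain ⟨x₀, hx₀mem, hx₀min⟩ := hsph.exists_isMinOn hne hcont.continuousOn
  rw [isMinOn_iff] at hx₀min
  set c := x₀ ⬝ᵥ (M *ᵥ x₀) with hc
  have hx₀ne : x₀ ≠ 0 := by
    intro h
    rw [h] at hx₀mem
    simp at hx₀mem
  have hcpos : 0 < c := hM x₀ hx₀ne
  refine ⟨c / (n + 1), by positivity, ?_⟩
  intro N hN
  intro x hx
  rw [Metric.mem_ball] at hN
  -- unit vector
  set u := ‖x‖⁻¹ • x with hu
  have hxn : (0:ℝ) < ‖x‖ := norm_pos_iff.mpr hx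
  have hun : ‖u‖ = 1 := by
    rw [hu, norm_smul]
    simp [abs_of_pos (inv_pos.mpr hxn)]
    field_simp
  have humem : u ∈ Metric.sphere (0 : Fin n → ℝ) 1 := by
    simpa [mem_sphere_iff_norm] using hun
  have h1 : c ≤ u ⬝ᵥ (M *ᵥ u) := hx₀min u humem
  have h2 : |u ⬝ᵥ ((N - M) *ᵥ u)| ≤ (n:ℝ) * ‖N - M‖ := by
    have := quad_bound (N - M) u
    rw [hun] at this
    simpa using this
  have hdist : ‖N - M‖ < c / (n + 1) := by
    rwa [dist_eq_norm] at hN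
  have hforms : u ⬝ᵥ (N *ᵥ u) = u ⬝ᵥ (M *ᵥ u) + u ⬝ᵥ ((N - M) *ᵥ u) := by
    rw [Matrix.sub_mulVec, dotProduct_sub]
    ring
  have hupos : 0 < u ⬝ᵥ (N *ᵥ u) := by
    have hnn : (n:ℝ) * ‖N - M‖ ≤ (n:ℝ) * (c / (n+1)) := by
      apply mul_le_mul_of_nonneg_left hdist.le (by positivity)
    have hlt : (n:ℝ) * (c / (n+1)) < c := by
      rw [div_eq_mul_inv]
      have h0 : (0:ℝ) < (n:ℝ) + 1 := by positivity
      rw [show (n:ℝ) * (c * ((n:ℝ)+1)⁻¹) = c * ((n:ℝ) * ((n:ℝ)+1)⁻¹) by ring]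
      have : (n:ℝ) * ((n:ℝ)+1)⁻¹ < 1 := by
        rw [mul_inv_lt_iff₀ h0]
        linarith
      nlinarith
    have habs := abs_le.mp h2
    rw [hforms]
    linarith
  -- scale back
  have hxu : x = ‖x‖ • u := by
    rw [hu, smul_smul]
    field_simp
    rw [one_smul]
  have hform2 : x ⬝ᵥ (N *ᵥ x) = (‖x‖ * ‖x‖) * (u ⬝ᵥ (N *ᵥ u)) := by
    conv_lhs => rw [hxu]
    rw [smul_dotProduct, Matrix.mulVec_smul, dotProduct_smul, smul_eq_mul, smul_eq_mul]
    ring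
  rw [hform2]
  exact mul_pos (mul_pos hxn hxn) hupos


lemma isClosed_nonnegform :
    IsClosed {M : Matrix (Fin n) (Fin n) ℝ | ∀ x : Fin n → ℝ, 0 ≤ x ⬝ᵥ (M *ᵥ x)} := by
  have hset : {M : Matrix (Fin n) (Fin n) ℝ | ∀ x : Fin n → ℝ, 0 ≤ x ⬝ᵥ (M *ᵥ x)}
      = ⋂ x : Fin n → ℝ, {M | 0 ≤ x ⬝ᵥ (M *ᵥ x)} := by
    ext M; simp [Set.mem_iInter]
  rw [hset]
  refine isClosed_iInter fun x => ?_
  have hlin : Continuous fun M : Matrix (Fin n) (Fin n) ℝ => x ⬝ᵥ (M *ᵥ x) := by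
    let f : Matrix (Fin n) (Fin n) ℝ →ₗ[ℝ] ℝ :=
      { toFun := fun M => x ⬝ᵥ (M *ᵥ x)
        map_add' := by intro M N; simp [Matrix.add_mulVec, dotProduct_add]
        map_smul' := by intro c M; simp [Matrix.smul_mulVec, dotProduct_smul] }
    exact f.continuous_of_finiteDimensional
  exact isClosed_le continuous_const hlin

lemma forward (hn : 0 < n) (A : Matrix (Fin n) (Fin n) ℝ) (ε : ℝ)
    (hA : ∀ μ ∈ spectrum ℂ (cplx A), ε < μ.re) :
    ∃ T : Matrix (Fin n) (Fin n) ℝ, T.PosDef ∧ (T * Aᵀ + A * T - (2 * ε) • T).PosDef := by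
  haveI : Nonempty (Fin n) := Fin.pos_iff_nonempty.mp hn
  letI : TopologicalSpace (Matrix (Fin n) (Fin n) ℝ) :=
    PseudoMetricSpace.toUniformSpace.toTopologicalSpace
  set B : Matrix (Fin n) (Fin n) ℝ := A - ε • 1 with hB
  have hcplxB : ∀ s : ℝ, cplx (B + s • 1) = cplx A + ((s - ε : ℝ) : ℂ) • 1 := by
    intro s
    rw [hB, cplx_add, cplx_sub, cplx_smul, cplx_smul, cplx_one, Complex.ofReal_sub, sub_smul]
    abel
  have hspecs : ∀ s : ℝ, 0 ≤ s → ∀ μ ∈ spectrum ℂ (cplx (B + s • 1)), 0 < μ.re := by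
    intro s hs μ hμ
    rw [hcplxB s, spectrum_shift] at hμ
    have := hA _ hμ
    simp only [Complex.sub_re, Complex.ofReal_re] at this
    linarith
  have hbij : ∀ s : ℝ, 0 ≤ s → Function.Bijective (sylv (B + s • 1)) :=
    fun s hs => sylv_bijective _ (hspecs s hs)
  -- continuous linear map family
  set L : ℝ → (Matrix (Fin n) (Fin n) ℝ →L[ℝ] Matrix (Fin n) (Fin n) ℝ) :=
    fun s => LinearMap.toContinuousLinearMap (sylv (B + s • 1)) with hL
  have hLapply : ∀ (s : ℝ) (X : Matrix (Fin n) (Fin n) ℝ), L s X = sylv (B + s • 1) X :=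
    fun s X => rfl
  have hLcont : Continuous L := by
    have hrw : L = fun s => LinearMap.toContinuousLinearMap (sylv B)
        + (2 * s) • LinearMap.toContinuousLinearMap
            (LinearMap.id (R := ℝ) (M := Matrix (Fin n) (Fin n) ℝ)) := by
      funext s
      refine ContinuousLinearMap.ext fun X => ?_
      rw [hLapply, sylv_shift]
      simp [LinearMap.coe_toContinuousLinearMap']
    rw [hrw]
    exact continuous_const.add ((continuous_const.mul continuous_id).smul continuous_const)
  have hLunit : ∀ s : ℝ, 0 ≤ s → IsUnit (L s) := by
    intro s hs
    exact ⟨ContinuousLinearEquiv.toUnit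
      (LinearEquiv.toContinuousLinearEquiv (LinearEquiv.ofBijective _ (hbij s hs))),
      ContinuousLinearMap.ext fun X => rfl⟩
  set T : ℝ → Matrix (Fin n) (Fin n) ℝ :=
    fun s => Ring.inverse (L s) (1 : Matrix (Fin n) (Fin n) ℝ) with hT
  have hTsolve : ∀ s : ℝ, 0 ≤ s → sylv (B + s • 1) (T s) = 1 := by
    intro s hs
    have h2 : (L s) * Ring.inverse (L s) = 1 := Ring.mul_inverse_cancel _ (hLunit s hs)
    calc sylv (B + s • 1) (T s) = (L s) (T s) := rfl
      _ = ((L s) * Ring.inverse (L s)) (1 : Matrix (Fin n) (Fin n) ℝ) := rfl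
      _ = (1 : Matrix (Fin n) (Fin n) ℝ →L[ℝ] Matrix (Fin n) (Fin n) ℝ) 1 := by rw [h2]
      _ = 1 := rfl
  have hTsym : ∀ s : ℝ, 0 ≤ s → (T s)ᵀ = T s := fun s hs =>
    sylv_symm _ (hbij s hs).1 _ (hTsolve s hs)
  have hTnondeg : ∀ s : ℝ, 0 ≤ s → ∀ x : Fin n → ℝ, x ≠ 0 → ¬ (T s *ᵥ x = 0) := by
    intro s hs x hx h0
    have h1 : x ⬝ᵥ ((sylv (B + s • 1) (T s)) *ᵥ x) = x ⬝ᵥ x := by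
      rw [hTsolve s hs, Matrix.one_mulVec]
    have h2 : x ⬝ᵥ ((sylv (B + s • 1) (T s)) *ᵥ x) = 0 := by
      rw [sylv_apply, Matrix.add_mulVec, dotProduct_add]
      have hA1 : x ⬝ᵥ (((B + s • 1) * T s) *ᵥ x) = 0 := by
        rw [← Matrix.mulVec_mulVec, h0, Matrix.mulVec_zero, dotProduct_zero]
      have hA2 : x ⬝ᵥ ((T s * (B + s • 1)ᵀ) *ᵥ x) = 0 := by
        rw [← Matrix.mulVec_mulVec, Matrix.dotProduct_mulVec]
        have : x ᵥ* (T s) = 0 := by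
          rw [← hTsym s hs, Matrix.vecMul_transpose, h0]
        rw [this, zero_dotProduct]
      rw [hA1, hA2, add_zero]
    exact hx (dotProduct_self_eq_zero.mp (h1.symm.trans h2))
  have hpos_of_nonneg : ∀ s : ℝ, 0 ≤ s →
      (∀ x : Fin n → ℝ, 0 ≤ x ⬝ᵥ (T s *ᵥ x)) → (T s).PosDef := by
    intro s hs hnn
    have hsemi : (T s).PosSemidef :=
      posSemidef_iff_dotProduct_mulVec.mpr ⟨herm_of_sym (hTsym s hs), fun x => by simpa using hnn x⟩
    refine PosDef.of_dotProduct_mulVec_pos (herm_of_sym (hTsym s hs)) fun x hx => ?_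
    have h0 : 0 ≤ x ⬝ᵥ (T s *ᵥ x) := hnn x
    rcases lt_or_eq_of_le h0 with h | h
    · simpa using h
    · exfalso
      have hz : T s *ᵥ x = 0 := (hsemi.dotProduct_mulVec_zero_iff x).mp (by simpa using h.symm)
      exact hTnondeg s hs x hx hz
  -- continuity of T on Ici 0
  have hTcont : ∀ s ∈ Set.Ici (0 : ℝ), ContinuousAt T s := by
    intro s hs
    have h1 : ContinuousAt (Ring.inverse :
        (Matrix (Fin n) (Fin n) ℝ →L[ℝ] Matrix (Fin n) (Fin n) ℝ) → _) (L s) := by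
      have hu := hLunit s hs
      haveI : CompleteSpace (Matrix (Fin n) (Fin n) ℝ →L[ℝ] Matrix (Fin n) (Fin n) ℝ) :=
        FiniteDimensional.complete ℝ _
      have := NormedRing.inverse_continuousAt
        (R := Matrix (Fin n) (Fin n) ℝ →L[ℝ] Matrix (Fin n) (Fin n) ℝ) hu.unit
      rwa [IsUnit.unit_spec] at this
    have heval : Continuous fun f : Matrix (Fin n) (Fin n) ℝ →L[ℝ] Matrix (Fin n) (Fin n) ℝ =>
        f (1 : Matrix (Fin n) (Fin n) ℝ) :=
      (ContinuousLinearMap.apply ℝ (Matrix (Fin n) (Fin n) ℝ)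
        (1 : Matrix (Fin n) (Fin n) ℝ)).continuous
    exact (heval.continuousAt.comp (h1.comp hLcont.continuousAt) : _)
  haveI : PreconnectedSpace (Set.Ici (0 : ℝ)) := Subtype.preconnectedSpace isPreconnected_Ici
  have hTrest : Continuous fun s : Set.Ici (0 : ℝ) => T (s : ℝ) := by
    apply continuous_iff_continuousAt.mpr
    intro s
    exact (hTcont s s.2).comp continuousAt_subtype_val
  set U : Set (Set.Ici (0 : ℝ)) := {s : Set.Ici (0 : ℝ) | (T (s : ℝ)).PosDef} with hU
  have hUopen : IsOpen U := by
    have hrw : U = (fun s : Set.Ici (0 : ℝ) => T (s : ℝ)) ⁻¹'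
        {M | ∀ x : Fin n → ℝ, x ≠ 0 → 0 < x ⬝ᵥ (M *ᵥ x)} := by
      ext s
      constructor
      · intro hsPD x hx
        simpa using hsPD.dotProduct_mulVec_pos hx
      · intro h
        exact PosDef.of_dotProduct_mulVec_pos (herm_of_sym (hTsym s s.2)) fun x hx => by simpa using h x hx
    rw [hrw]
    exact (isOpen_posform hn).preimage hTrest
  have hUclosed : IsClosed U := by
    have hrw : U = (fun s : Set.Ici (0 : ℝ) => T (s : ℝ)) ⁻¹'
        {M | ∀ x : Fin n → ℝ, 0 ≤ x ⬝ᵥ (M *ᵥ x)} := by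
      ext s
      constructor
      · intro hsPD x
        by_cases hx : x = 0
        · simp [hx]
        · exact le_of_lt (by simpa using hsPD.dotProduct_mulVec_pos hx)
      · intro h
        exact hpos_of_nonneg s s.2 h
    rw [hrw]
    exact isClosed_nonnegform.preimage hTrest
  -- nonemptiness via a large shift
  have hUne : U.Nonempty := by
    set K : ℝ := ‖LinearMap.toContinuousLinearMap (sylv B)‖ with hK
    have hK0 : (0 : ℝ) ≤ K := norm_nonneg _
    have hn1 : (1 : ℝ) ≤ (n : ℝ) := by exact_mod_cast hn
    set s₀ : ℝ := (n : ℝ) * K + K + 1 with hs₀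
    have hs₀nonneg : (0 : ℝ) ≤ s₀ := by positivity
    have hs₀1 : (1 : ℝ) ≤ s₀ := by nlinarith
    have hsolve := hTsolve s₀ hs₀nonneg
    have hTseq : sylv B (T s₀) + (2 * s₀) • (T s₀) = 1 := by
      rw [← sylv_shift]; exact hsolve
    have h2s : (2 * s₀) • (T s₀) = 1 - sylv B (T s₀) := by
      rw [← hTseq]; abel
    have hnormBound : ‖sylv B (T s₀)‖ ≤ K * ‖T s₀‖ := by
      have hc : sylv B (T s₀) = (LinearMap.toContinuousLinearMap (sylv B)) (T s₀) := by
        simp [LinearMap.coe_toContinuousLinearMap']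
      rw [hc, hK]
      exact (LinearMap.toContinuousLinearMap (sylv B)).le_opNorm (T s₀)
    have hTsnorm : (2 * s₀ - K) * ‖T s₀‖ ≤ 1 := by
      have h1 : ‖(2 * s₀) • (T s₀)‖ = (2 * s₀) * ‖T s₀‖ := by
        rw [norm_smul, Real.norm_eq_abs, abs_of_pos (by linarith)]
      have h2 : ‖(1 : Matrix (Fin n) (Fin n) ℝ) - sylv B (T s₀)‖
          ≤ ‖(1 : Matrix (Fin n) (Fin n) ℝ)‖ + ‖sylv B (T s₀)‖ := norm_sub_le _ _
      have h3 : ‖(1 : Matrix (Fin n) (Fin n) ℝ)‖ = 1 := norm_one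
      have h4 := h2s
      have h5 : (2 * s₀) * ‖T s₀‖ ≤ 1 + K * ‖T s₀‖ := by
        rw [← h1]
        rw [h4]
        calc ‖(1 : Matrix (Fin n) (Fin n) ℝ) - sylv B (T s₀)‖
            ≤ ‖(1 : Matrix (Fin n) (Fin n) ℝ)‖ + ‖sylv B (T s₀)‖ := h2
          _ ≤ 1 + K * ‖T s₀‖ := by rw [h3]; linarith [hnormBound]
      linarith
    have hTspos : (T s₀).PosDef := by
      refine PosDef.of_dotProduct_mulVec_pos (herm_of_sym (hTsym s₀ hs₀nonneg)) fun x hx => ?_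
      have hw : (0 : ℝ) < ‖x‖ * ‖x‖ := by
        have := norm_pos_iff.mpr hx
        positivity
      have e3 : ‖x‖ * ‖x‖ ≤ x ⬝ᵥ x := norm_sq_le_dotProduct hn x
      have e1 : (2 * s₀) * (x ⬝ᵥ (T s₀ *ᵥ x)) = x ⬝ᵥ x - x ⬝ᵥ (sylv B (T s₀) *ᵥ x) := by
        have h6 : ((2 * s₀) • (T s₀)) *ᵥ x = (1 - sylv B (T s₀)) *ᵥ x := by rw [h2s]
        have h7 : x ⬝ᵥ (((2 * s₀) • (T s₀)) *ᵥ x) = (2 * s₀) * (x ⬝ᵥ (T s₀ *ᵥ x)) := by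
          rw [Matrix.smul_mulVec, dotProduct_smul, smul_eq_mul]
        have h8 : x ⬝ᵥ ((1 - sylv B (T s₀)) *ᵥ x)
            = x ⬝ᵥ x - x ⬝ᵥ (sylv B (T s₀) *ᵥ x) := by
          rw [Matrix.sub_mulVec, dotProduct_sub, Matrix.one_mulVec]
        rw [← h7, h6, h8]
      have e2 : |x ⬝ᵥ (sylv B (T s₀) *ᵥ x)| ≤ (n : ℝ) * (K * ‖T s₀‖) * (‖x‖ * ‖x‖) := by
        calc |x ⬝ᵥ (sylv B (T s₀) *ᵥ x)|
            ≤ (n : ℝ) * ‖sylv B (T s₀)‖ * (‖x‖ * ‖x‖) := quad_bound _ x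
          _ ≤ (n : ℝ) * (K * ‖T s₀‖) * (‖x‖ * ‖x‖) := by
              apply mul_le_mul_of_nonneg_right _ (le_of_lt hw)
              apply mul_le_mul_of_nonneg_left hnormBound (by positivity)
      set t : ℝ := ‖T s₀‖ with ht
      have ht0 : (0 : ℝ) ≤ t := norm_nonneg _
      have h2s₀K : 2 * s₀ - K = 2 * (n : ℝ) * K + K + 2 := by rw [hs₀]; ring
      have htle : t * (2 * (n : ℝ) * K + K + 2) ≤ 1 := by
        rw [← h2s₀K]; linarith [hTsnorm]
      have hkey : (n : ℝ) * K * t < 1 := by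
        rcases eq_or_lt_of_le ht0 with h0t | h0t
        · rw [← h0t]; norm_num
        · nlinarith [htle, h0t, hK0, hn1]
      have hwkey : (0 : ℝ) < (‖x‖ * ‖x‖) * (1 - (n : ℝ) * K * t) := by
        apply mul_pos hw
        linarith
      have expand : (‖x‖ * ‖x‖) * (1 - (n : ℝ) * K * t)
          = (‖x‖ * ‖x‖) - (n : ℝ) * K * t * (‖x‖ * ‖x‖) := by ring
      have herr : x ⬝ᵥ (sylv B (T s₀) *ᵥ x) ≤ (n : ℝ) * K * t * (‖x‖ * ‖x‖) := by
        have := (abs_le.mp e2).2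
        calc x ⬝ᵥ (sylv B (T s₀) *ᵥ x) ≤ |x ⬝ᵥ (sylv B (T s₀) *ᵥ x)| := le_abs_self _
          _ ≤ (n : ℝ) * (K * t) * (‖x‖ * ‖x‖) := e2
          _ = (n : ℝ) * K * t * (‖x‖ * ‖x‖) := by ring
      -- conclude 0 < x ⬝ᵥ T s₀ *ᵥ x
      show (0 : ℝ) < star x ⬝ᵥ (T s₀ *ᵥ x)
      rw [star_trivial]
      by_contra hq0
      push_neg at hq0
      have hprod : (2 * s₀) * (x ⬝ᵥ (T s₀ *ᵥ x)) ≤ 0 :=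
        mul_nonpos_iff.mpr (Or.inl ⟨by linarith, hq0⟩)
      rw [expand] at hwkey
      linarith [e1, herr, e3, hwkey, hprod]
    exact ⟨⟨s₀, hs₀nonneg⟩, hTspos⟩
  have hUuniv : U = Set.univ := IsClopen.eq_univ ⟨hUclosed, hUopen⟩ hUne
  have h0mem : (⟨0, Set.self_mem_Ici⟩ : Set.Ici (0 : ℝ)) ∈ U := by rw [hUuniv]; trivial
  refine ⟨T 0, h0mem, ?_⟩
  have hfinal : T 0 * Aᵀ + A * T 0 - (2 * ε) • T 0 = sylv (B + (0 : ℝ) • 1) (T 0) := by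
    rw [sylv_apply, hB]
    simp only [zero_smul, add_zero, Matrix.sub_mul, Matrix.mul_sub, Matrix.transpose_sub,
      Matrix.transpose_smul, Matrix.transpose_one, Matrix.smul_mul, Matrix.mul_smul,
      one_mul, mul_one, two_mul]
    module
  rw [hfinal, hTsolve 0 le_rfl]
  exact Matrix.PosDef.one

end HLyap

/-- Lyapunov characterization of the half-plane LMI region: all eigenvalues of
`A` have real part greater than `ε` iff there is a symmetric positive definite
`T` with `TAᵀ + AT − 2εT` positive definite. -/
theorem halfplane_lyapunov_characterization (n : ℕ)
    (A : Matrix (Fin n) (Fin n) ℝ) (ε : ℝ) :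
    (∀ μ ∈ spectrum ℂ (A.map (Complex.ofReal : ℝ → ℂ)), ε < μ.re) ↔
      ∃ T : Matrix (Fin n) (Fin n) ℝ, T.PosDef ∧
        (T * Aᵀ + A * T - (2 * ε) • T).PosDef := by
  rcases Nat.eq_zero_or_pos n with hn | hn
  · subst hn
    constructor
    · intro _
      refine ⟨1, Matrix.PosDef.one, ?_, fun x hx => absurd (Finsupp.ext fun i => i.elim0) hx⟩
      show _ᴴ = _
      ext i j
      exact i.elim0
    · intro _ μ hμ
      rw [spectrum.mem_iff] at hμ
      haveI : Subsingleton (Matrix (Fin 0) (Fin 0) ℂ) :=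
        ⟨fun a b => by ext i j; exact i.elim0⟩
      exact (hμ (isUnit_of_subsingleton _)).elim
  · constructor
    · intro h
      exact HLyap.forward hn A ε h
    · rintro ⟨T, hT, hQ⟩
      exact HLyap.backward A ε T hT hQ
end

section
/- (Optimality of the Kalman gain.) Let P ∈ ℝ^{n×n} be symmetric positive semidefinite, R ∈ ℝ^{m×m} symmetric positive definite, and H ∈ ℝ^{m×n}. For N ∈ ℝ^{n×m} define the updated covariance J(N) := (I − N H) P (I − N H)ᵀ + N R Nᵀ. Then the Kalman gain N* := P Hᵀ (H P Hᵀ + R)^{−1} is well defined (H P Hᵀ + R is invertible) and minimizes the trace of the updated covariance: trace(J(N*)) ≤ trace(J(N)) for every N ∈ ℝ^{n×m}. -/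
open Matrix

/-- The updated covariance of the Kalman correction step with gain `N`:
`J(N) = (I − NH) P (I − NH)ᵀ + N R Nᵀ`. -/
def updatedCov {n m : ℕ} (P : Matrix (Fin n) (Fin n) ℝ)
    (R : Matrix (Fin m) (Fin m) ℝ) (H : Matrix (Fin m) (Fin n) ℝ)
    (N : Matrix (Fin n) (Fin m) ℝ) : Matrix (Fin n) (Fin n) ℝ :=
  (1 - N * H) * P * (1 - N * H)ᵀ + N * R * Nᵀ

lemma trace_nonneg_of_psd {k : ℕ} {M : Matrix (Fin k) (Fin k) ℝ}
    (h : M.PosSemidef) : 0 ≤ M.trace :=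
  Finset.sum_nonneg fun i _ => by simpa using h.2 (Finsupp.single i 1)

/-- Optimality of the Kalman gain: `H P Hᵀ + R` is invertible, and the gain
`N* = P Hᵀ (H P Hᵀ + R)⁻¹` minimizes the trace of the updated covariance. -/
theorem kalman_gain_optimal (n m : ℕ) (P : Matrix (Fin n) (Fin n) ℝ)
    (R : Matrix (Fin m) (Fin m) ℝ) (H : Matrix (Fin m) (Fin n) ℝ)
    (hP : P.PosSemidef) (hR : R.PosDef) :
    IsUnit (H * P * Hᵀ + R) ∧
    ∀ N : Matrix (Fin n) (Fin m) ℝ,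
      (updatedCov P R H (P * Hᵀ * (H * P * Hᵀ + R)⁻¹)).trace ≤
        (updatedCov P R H N).trace := by
  set S : Matrix (Fin m) (Fin m) ℝ := H * P * Hᵀ + R with hSdef
  have hHPHt : (H * P * Hᵀ).PosSemidef := by
    have := hP.mul_mul_conjTranspose_same H
    simpa [conjTranspose_eq_transpose_of_trivial] using this
  have hS : S.PosDef := Matrix.PosDef.posSemidef_add hHPHt hR
  have hSu : IsUnit S := hS.isUnit
  have hPt : Pᵀ = P := by
    have := hP.isHermitian.eq
    simpa [conjTranspose_eq_transpose_of_trivial] using this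
  have hSt : Sᵀ = S := by
    have := hS.isHermitian.eq
    simpa [conjTranspose_eq_transpose_of_trivial] using this
  have h1S : S⁻¹ * S = 1 := nonsing_inv_mul S ((isUnit_iff_isUnit_det S).mp hSu)
  have hS1 : S * S⁻¹ = 1 := mul_nonsing_inv S ((isUnit_iff_isUnit_det S).mp hSu)
  set N₀ : Matrix (Fin n) (Fin m) ℝ := P * Hᵀ * S⁻¹ with hN₀
  have hN₀t : N₀ᵀ = S⁻¹ * (H * P) := by
    rw [hN₀, transpose_mul, transpose_mul, transpose_nonsing_inv, hSt, transpose_transpose,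
      hPt]
  have hA : N₀ * S = P * Hᵀ := by
    rw [hN₀, Matrix.mul_assoc, h1S, Matrix.mul_one]
  have hC : S * N₀ᵀ = H * P := by
    rw [hN₀t, ← Matrix.mul_assoc, hS1, Matrix.one_mul]
  have hD : ∀ X : Matrix (Fin m) (Fin n) ℝ, N₀ * (S * X) = P * (Hᵀ * X) := by
    intro X
    rw [← Matrix.mul_assoc, hA, Matrix.mul_assoc]
  have hE : N₀ * (H * P) = P * (Hᵀ * N₀ᵀ) := by
    rw [← hC, hD]
  have expand : ∀ N' : Matrix (Fin n) (Fin m) ℝ,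
      updatedCov P R H N' = P - P * Hᵀ * N'ᵀ - N' * (H * P) + N' * S * N'ᵀ := by
    intro N'
    unfold updatedCov
    rw [hSdef]
    simp only [transpose_sub, transpose_mul, transpose_one, Matrix.sub_mul, Matrix.mul_sub,
      Matrix.one_mul, Matrix.mul_one, Matrix.add_mul, Matrix.mul_add, hPt, Matrix.mul_assoc]
    abel
  have key : ∀ N : Matrix (Fin n) (Fin m) ℝ,
      updatedCov P R H N - updatedCov P R H N₀ = (N - N₀) * S * (N - N₀)ᵀ := by
    intro N
    rw [expand N, expand N₀]
    simp only [transpose_sub, Matrix.sub_mul, Matrix.mul_sub, Matrix.mul_assoc, hC, hD, hE]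
    abel
  refine ⟨hSu, fun N => ?_⟩
  have psd : ((N - N₀) * S * (N - N₀)ᵀ).PosSemidef := by
    have := hS.posSemidef.mul_mul_conjTranspose_same (N - N₀)
    simpa [conjTranspose_eq_transpose_of_trivial] using this
  have htr := trace_nonneg_of_psd psd
  rw [← key N, trace_sub] at htr
  linarith
end
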